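/- Let Γ be a group acting by isometries on a metric space X, and suppose there is a nonempty Γ-invariant subset C ⊆ X on which Γ acts properly discontinuously and cocompactly, with C a length (geodesic) space. Then Γ is finitely generated and, for any point x₀ ∈ C, the orbit map γ ↦ γ·x₀ is a quasi-isometry from Γ (with a word metric) to C (Milnor–Švarc lemma). -/

import Mathlib

/-- The word length of `g` with respect to a generating set `S`. -/
noncomputable def wordLength {G : Type*} [Group G] (S : Set G) (g : G) : ℕ :=
  sInf {p : ℕ | ∃ f : Fin p → G, (∀ i, f i ∈ S ∪ S⁻¹) ∧ g = (List.ofFn f).prod}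

theorem exists_inj_seq {α : Type*} {G : ℕ → Set α} (h : ∀ n, (G n).Infinite) :
    ∃ δ : ℕ → α, (∀ m n, m < n → δ m ≠ δ n) ∧ ∀ n, δ n ∈ G n := by
  classical
  have key : ∀ (s : Finset α) (n : ℕ), ((G n) \ ↑s).Nonempty :=
    fun s n => ((h n).diff s.finite_toSet).nonempty
  let F : ℕ → Finset α := fun n => Nat.rec ∅ (fun k s => insert ((key s k).choose) s) n
  have hF : ∀ n, F (n + 1) = insert ((key (F n) n).choose) (F n) := fun n => rfl
  refine ⟨fun n => (key (F n) n).choose, ?_, fun n => ((key (F n) n).choose_spec).1⟩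
  have hmem : ∀ m n, m < n → (key (F m) m).choose ∈ F n := by
    intro m n hmn
    induction n with
    | zero => omega
    | succ k ih =>
      rw [hF]
      rcases Nat.lt_succ_iff_lt_or_eq.mp hmn with h' | h'
      · exact Finset.mem_insert_of_mem (ih h')
      · subst h'; exact Finset.mem_insert_self _ _
  intro m n hmn heq
  have heq' : (key (F m) m).choose = (key (F n) n).choose := heq
  refine ((key (F n) n).choose_spec).2 ?_
  rw [← heq']
  exact Finset.mem_coe.mpr (hmem m n hmn)

/-- Milnor–Švarc lemma: if a group `Γ` acts by isometries on a metric space `X`,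
preserving a nonempty subset `C` which is geodesic, and the action on `C` is properly
discontinuous and cocompact, then `Γ` is finitely generated and every orbit map
`γ ↦ γ·x₀` (`x₀ ∈ C`) is a quasi-isometry from `Γ` with a word metric to `C`. -/
theorem milnor_svarc {Γ X : Type*} [Group Γ] [MetricSpace X] [MulAction Γ X]
    (hisom : ∀ γ : Γ, Isometry (fun x : X => γ • x))
    (C : Set X) (hCne : C.Nonempty)
    (hCinv : ∀ γ : Γ, ∀ x ∈ C, γ • x ∈ C)
    (hgeo : ∀ x ∈ C, ∀ y ∈ C, ∃ f : ℝ → X, f 0 = x ∧ f (dist x y) = y ∧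
      (∀ t ∈ Set.Icc (0 : ℝ) (dist x y), f t ∈ C) ∧
      ∀ s ∈ Set.Icc (0 : ℝ) (dist x y), ∀ t ∈ Set.Icc (0 : ℝ) (dist x y),
        dist (f s) (f t) = |s - t|)
    (hproper : ∀ K ⊆ C, IsCompact K → {γ : Γ | ((γ • ·) '' K ∩ K).Nonempty}.Finite)
    (hcocompact : ∃ K ⊆ C, IsCompact K ∧ ∀ x ∈ C, ∃ γ : Γ, γ • x ∈ K) :
    ∃ S : Finset Γ, Subgroup.closure (S : Set Γ) = ⊤ ∧
      ∀ x₀ ∈ C, ∃ L : ℝ, 0 < L ∧ ∃ A : ℝ, 0 ≤ A ∧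
        (∀ γ δ : Γ,
          (1 / L) * (wordLength (S : Set Γ) (γ⁻¹ * δ) : ℝ) - A ≤ dist (γ • x₀) (δ • x₀) ∧
          dist (γ • x₀) (δ • x₀) ≤ L * (wordLength (S : Set Γ) (γ⁻¹ * δ) : ℝ) + A) ∧
        (∀ x ∈ C, ∃ γ : Γ, dist (γ • x₀) x ≤ A) := by
  classical
  obtain ⟨K, hKC, hKcomp, hKcover⟩ := hcocompact
  have hdist : ∀ (γ : Γ) (x y : X), dist (γ • x) (γ • y) = dist x y :=
    fun γ x y => (hisom γ).dist_eq x y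
  obtain ⟨c0, hc0⟩ := hCne
  obtain ⟨γ0, hγ0⟩ := hKcover c0 hc0
  obtain ⟨k₀, hk₀K⟩ : K.Nonempty := ⟨γ0 • c0, hγ0⟩
  have hk₀C : k₀ ∈ C := hKC hk₀K
  -- Lebesgue-type claim: a uniform neighborhood of K is covered by finitely many translates.
  have lebesgue : ∃ ε : ℝ, 0 < ε ∧ ∃ F : Finset Γ,
      ∀ x ∈ C, (∃ k ∈ K, dist x k ≤ ε) → ∃ γ ∈ F, γ • x ∈ K := by
    set G : ℕ → Set Γ :=
      fun n => {γ | ∃ x ∈ C, (∃ k ∈ K, dist x k ≤ 1 / (n + 1)) ∧ γ • x ∈ K} with hG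
    by_cases hfin : ∃ n, (G n).Finite
    · obtain ⟨n, hn⟩ := hfin
      refine ⟨1 / (n + 1), by positivity, hn.toFinset, fun x hx hxk => ?_⟩
      obtain ⟨γ, hγ⟩ := hKcover x hx
      exact ⟨γ, hn.mem_toFinset.mpr ⟨x, hx, hxk, hγ⟩, hγ⟩
    · exfalso
      push_neg at hfin
      obtain ⟨δ, hδinj, hδmem⟩ := exists_inj_seq (fun n => hfin n)
      choose x hxC hxk hδx using hδmem
      choose k hkK hdxk using hxk
      obtain ⟨a, haK, φ, hφ, hconv⟩ := hKcomp.tendsto_subseq hkK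
      have hxconv : Filter.Tendsto (x ∘ φ) Filter.atTop (nhds a) := by
        have hd0 : Filter.Tendsto (fun n => dist ((x ∘ φ) n) ((k ∘ φ) n))
            Filter.atTop (nhds 0) := by
          refine squeeze_zero (fun n => dist_nonneg) (fun n => ?_)
            tendsto_one_div_add_atTop_nhds_zero_nat
          calc dist ((x ∘ φ) n) ((k ∘ φ) n) ≤ 1 / ((φ n : ℝ) + 1) := hdxk (φ n)
            _ ≤ 1 / ((n : ℝ) + 1) := by
                gcongr
                exact_mod_cast hφ.le_apply
        refine Filter.Tendsto.congr_dist hconv ?_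
        simpa [dist_comm] using hd0
      set K2 : Set X := K ∪ insert a (Set.range (x ∘ φ)) with hK2
      have hK2C : K2 ⊆ C := by
        rintro y (hy | hy | ⟨n, rfl⟩)
        · exact hKC hy
        · exact hKC (hy ▸ haK)
        · exact hxC (φ n)
      have hK2comp : IsCompact K2 := hKcomp.union hxconv.isCompact_insert_range
      have hfinite := hproper K2 hK2C hK2comp
      refine hfinite.not_infinite ?_
      refine Set.infinite_of_injective_forall_mem (f := fun n => δ (φ n)) ?_ ?_
      · intro m n heq
        rcases lt_trichotomy m n with h | h | h
        · exact absurd heq (hδinj _ _ (hφ h))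
        · exact h
        · exact absurd heq.symm (hδinj _ _ (hφ h))
      · intro n
        refine ⟨δ (φ n) • x (φ n), ⟨x (φ n), ?_, rfl⟩, Or.inl (hδx (φ n))⟩
        exact Or.inr (Set.mem_insert_of_mem _ ⟨n, rfl⟩)
  obtain ⟨ε, hε, F, hF⟩ := lebesgue
  -- the finite set of elements almost fixing K
  have hF0fin := hproper K hKC hKcomp
  set F₀ : Finset Γ := hF0fin.toFinset with hF₀
  set S : Finset Γ := F ∪ F₀ with hS
  set SS : Set Γ := (↑S : Set Γ) ∪ (↑S : Set Γ)⁻¹ with hSS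
  -- every group element is represented by a word of controlled length
  have repr : ∀ γ : Γ, ∃ l : List Γ, (∀ s ∈ l, s ∈ SS) ∧ γ = l.prod ∧
      (l.length : ℝ) ≤ dist k₀ (γ • k₀) / ε + 2 := by
    intro γ
    set R := dist k₀ (γ • k₀) with hRdef
    have hRnn : 0 ≤ R := dist_nonneg
    have hγk₀C : γ • k₀ ∈ C := hCinv γ k₀ hk₀C
    obtain ⟨f, hf0, hfR, hfC, hfiso⟩ := hgeo k₀ hk₀C (γ • k₀) hγk₀C
    set n := ⌈R / ε⌉₊ with hn
    have hmemF₀ : ∀ τ : Γ, τ • k₀ ∈ K → τ ∈ (↑F₀ : Set Γ) := by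
      intro τ hτ
      simp only [hF₀, Set.Finite.coe_toFinset]
      exact ⟨τ • k₀, ⟨k₀, hk₀K, rfl⟩, hτ⟩
    by_cases hn0 : n = 0
    · have h1 : R / ε ≤ 0 := Nat.ceil_eq_zero.mp hn0
      have hR0 : R = 0 := by
        by_contra h
        have h2 : 0 < R / ε := div_pos (lt_of_le_of_ne hRnn (Ne.symm h)) hε
        linarith
      have hγk : γ • k₀ = k₀ := by
        have : dist k₀ (γ • k₀) = 0 := hR0
        exact (dist_eq_zero.mp this).symm
      refine ⟨[γ], ?_, by simp, ?_⟩
      · intro s hs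
        rw [List.mem_singleton] at hs
        rw [hs]
        exact Or.inl (Finset.mem_coe.mpr (Finset.mem_union_right _
          (Set.Finite.mem_toFinset _ |>.mpr ⟨γ • k₀, ⟨k₀, hk₀K, rfl⟩, by rw [hγk]; exact hk₀K⟩)))
      · simp only [List.length_singleton]
        have h0 : (0:ℝ) ≤ R / ε := div_nonneg hRnn hε.le
        norm_num
        linarith
    · have hn1 : 1 ≤ n := Nat.one_le_iff_ne_zero.mpr hn0
      have hnpos : (0:ℝ) < n := by exact_mod_cast hn1
      have hnR : R ≤ n * ε := by
        have h1 : R / ε ≤ n := Nat.le_ceil (R / ε)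
        calc R = (R / ε) * ε := by field_simp
          _ ≤ n * ε := by gcongr
      have hti : ∀ i : ℕ, i ≤ n → ((i : ℝ) * (R / n)) ∈ Set.Icc (0:ℝ) R := by
        intro i hi
        constructor
        · positivity
        · calc (i : ℝ) * (R / n) ≤ (n : ℝ) * (R / n) := by
                gcongr
            _ = R := by field_simp
      have main : ∀ i : ℕ, i ≤ n → ∃ l : List Γ, (∀ s ∈ l, s ∈ (↑F : Set Γ)) ∧
          l.length ≤ i ∧ l.prod • f ((i : ℝ) * (R / n)) ∈ K := by
        intro i
        induction i with
        | zero =>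
          intro _
          refine ⟨[], by simp, by simp, ?_⟩
          simpa [hf0] using hk₀K
        | succ j ih =>
          intro hj
          obtain ⟨l, hlmem, hllen, hlK⟩ := ih (Nat.le_of_succ_le hj)
          have htj : ((j : ℝ) * (R / n)) ∈ Set.Icc (0:ℝ) R := hti j (Nat.le_of_succ_le hj)
          have htj1 : (((j+1 : ℕ) : ℝ) * (R / n)) ∈ Set.Icc (0:ℝ) R := hti (j+1) hj
          have hdist2 : dist (f (((j+1 : ℕ) : ℝ) * (R / n))) (f ((j : ℝ) * (R / n))) ≤ ε := by
            rw [hfiso _ htj1 _ htj]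
            have h1 : ((j+1 : ℕ) : ℝ) * (R / n) - (j : ℝ) * (R / n) = R / n := by
              push_cast; ring
            rw [h1, abs_of_nonneg (by positivity)]
            rw [div_le_iff₀ hnpos]
            linarith [hnR]
          have hy : l.prod • f (((j+1 : ℕ) : ℝ) * (R / n)) ∈ C :=
            hCinv _ _ (hfC _ htj1)
          obtain ⟨σ, hσF, hσK⟩ := hF _ hy
            ⟨l.prod • f ((j : ℝ) * (R / n)), hlK, by rw [hdist]; exact hdist2⟩
          refine ⟨σ :: l, ?_, by simpa using Nat.succ_le_succ hllen, ?_⟩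
          · intro s hs
            rcases List.mem_cons.mp hs with h | h
            · exact h ▸ Finset.mem_coe.mpr hσF
            · exact hlmem s h
          · rw [List.prod_cons, mul_smul]
            exact hσK
      obtain ⟨l, hlmem, hllen, hlK⟩ := main n le_rfl
      have hnRn : (n : ℝ) * (R / n) = R := by field_simp
      rw [hnRn, hRdef, hfR] at hlK
      have hτK : (l.prod * γ) • k₀ ∈ K := by rw [mul_smul]; exact hlK
      refine ⟨(l.map (·⁻¹)).reverse ++ [l.prod * γ], ?_, ?_, ?_⟩
      · intro s hs
        rcases List.mem_append.mp hs with h | h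
        · rw [List.mem_reverse, List.mem_map] at h
          obtain ⟨a, haF, rfl⟩ := h
          refine Or.inr ?_
          rw [Set.mem_inv]
          simp only [inv_inv]
          exact Finset.mem_coe.mpr (Finset.mem_union_left _ (Finset.mem_coe.mp (hlmem a haF)))
        · rw [List.mem_singleton] at h
          subst h
          exact Or.inl (Finset.mem_coe.mpr (Finset.mem_union_right _
            (Set.Finite.mem_toFinset _ |>.mpr ⟨(l.prod * γ) • k₀, ⟨k₀, hk₀K, rfl⟩, hτK⟩)))
      · rw [List.prod_append, List.prod_singleton, ← List.prod_inv_reverse]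
        group
      · rw [List.length_append, List.length_reverse, List.length_map, List.length_singleton]
        have h2 : (n : ℝ) < R / ε + 1 := Nat.ceil_lt_add_one (by positivity)
        have h3 : (l.length : ℝ) ≤ (n : ℝ) := by exact_mod_cast hllen
        push_cast
        linarith
  -- generation
  have hgen : Subgroup.closure (↑S : Set Γ) = ⊤ := by
    rw [Subgroup.eq_top_iff']
    intro γ
    obtain ⟨l, hl, hγ, -⟩ := repr γ
    rw [hγ]
    refine Subgroup.list_prod_mem _ (fun s hs => ?_)
    rcases hl s hs with h | h
    · exact Subgroup.subset_closure h
    · rw [Set.mem_inv] at h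
      have := Subgroup.subset_closure h
      simpa using (Subgroup.closure (↑S : Set Γ)).inv_mem this
  -- word length upper bound from repr
  have hword_le : ∀ γ : Γ, (wordLength (↑S : Set Γ) γ : ℝ) ≤ dist k₀ (γ • k₀) / ε + 2 := by
    intro γ
    obtain ⟨l, hl, hγ, hlen⟩ := repr γ
    have hmem : l.length ∈ {p : ℕ | ∃ f : Fin p → Γ,
        (∀ i, f i ∈ (↑S : Set Γ) ∪ (↑S : Set Γ)⁻¹) ∧ γ = (List.ofFn f).prod} := by
      refine ⟨l.get, fun i => hl _ (l.get_mem i), ?_⟩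
      rw [List.ofFn_get]
      exact hγ
    have h1 : wordLength (↑S : Set Γ) γ ≤ l.length := Nat.sInf_le hmem
    have h2 : (wordLength (↑S : Set Γ) γ : ℝ) ≤ (l.length : ℝ) := by exact_mod_cast h1
    linarith
  -- the maximal displacement of k₀ by a generator
  have hSSfin : SS.Finite := (S.finite_toSet).union (S.finite_toSet.inv)
  obtain ⟨M, hM, hM0⟩ : ∃ M : ℝ, (∀ s ∈ SS, dist (s • k₀) k₀ ≤ M) ∧ 0 ≤ M := by
    obtain ⟨M, hM⟩ := (hSSfin.image (fun s => dist (s • k₀) k₀)).bddAbove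
    refine ⟨max M 0, fun s hs => le_max_of_le_left (hM ⟨s, hs, rfl⟩), le_max_right _ _⟩
  -- distance upper bound in terms of word length
  have hdist_le : ∀ γ : Γ, dist k₀ (γ • k₀) ≤ M * wordLength (↑S : Set Γ) γ := by
    have aux : ∀ l : List Γ, (∀ s ∈ l, s ∈ SS) → dist k₀ (l.prod • k₀) ≤ M * l.length := by
      intro l
      induction l with
      | nil => simp
      | cons s t ih =>
        intro h
        have h1 : dist k₀ (s • k₀) ≤ M := by
          rw [dist_comm]; exact hM s (h s List.mem_cons_self)
        have h2 : dist k₀ (t.prod • k₀) ≤ M * t.length :=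
          ih (fun a ha => h a (List.mem_cons_of_mem s ha))
        rw [List.prod_cons, mul_smul]
        calc dist k₀ (s • t.prod • k₀)
            ≤ dist k₀ (s • k₀) + dist (s • k₀) (s • t.prod • k₀) := dist_triangle _ _ _
          _ = dist k₀ (s • k₀) + dist k₀ (t.prod • k₀) := by rw [hdist]
          _ ≤ M + M * t.length := by linarith
          _ = M * (s :: t).length := by rw [List.length_cons]; push_cast; ring
    intro γ
    obtain ⟨l, hl, hγ, -⟩ := repr γ
    have hne : {p : ℕ | ∃ f : Fin p → Γ,
        (∀ i, f i ∈ (↑S : Set Γ) ∪ (↑S : Set Γ)⁻¹) ∧ γ = (List.ofFn f).prod}.Nonempty := by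
      refine ⟨l.length, l.get, fun i => hl _ (l.get_mem i), ?_⟩
      rw [List.ofFn_get]; exact hγ
    obtain ⟨w, hw, hγw⟩ := Nat.sInf_mem hne
    have := aux (List.ofFn w) (fun s hs => by
      obtain ⟨i, rfl⟩ := List.mem_ofFn.mp hs
      exact hw i)
    rw [← hγw, List.length_ofFn] at this
    exact this
  -- diameter bound for K
  obtain ⟨D, hD⟩ := Metric.isBounded_iff.mp hKcomp.isBounded
  have hD0 : 0 ≤ D := by
    have := hD hk₀K hk₀K
    rwa [dist_self] at this
  refine ⟨S, hgen, ?_⟩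
  intro x₀ hx₀
  set d₀ := dist x₀ k₀ with hd₀
  have hd₀0 : 0 ≤ d₀ := dist_nonneg
  refine ⟨max M (1 / ε), lt_of_lt_of_le (by positivity) (le_max_right _ _),
    2 * ε + D + 2 * d₀, by positivity, ?_, ?_⟩
  · intro γ δ
    set g := γ⁻¹ * δ with hg
    set w : ℝ := (wordLength (↑S : Set Γ) g : ℝ) with hw
    have hw0 : 0 ≤ w := Nat.cast_nonneg _
    have hkey : dist (γ • x₀) (δ • x₀) = dist x₀ (g • x₀) := by
      conv_lhs => rw [← hdist γ⁻¹, ← mul_smul, ← mul_smul, inv_mul_cancel, one_smul, ← hg]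
    have htri1 : dist x₀ (g • x₀) ≤ dist k₀ (g • k₀) + 2 * d₀ := by
      have h1 : dist (g • k₀) (g • x₀) = d₀ := by rw [hdist, dist_comm, hd₀]
      calc dist x₀ (g • x₀) ≤ dist x₀ k₀ + dist k₀ (g • k₀) + dist (g • k₀) (g • x₀) :=
            dist_triangle4 _ _ _ _
        _ = dist k₀ (g • k₀) + 2 * d₀ := by rw [h1, ← hd₀]; ring
    have htri2 : dist k₀ (g • k₀) ≤ dist x₀ (g • x₀) + 2 * d₀ := by
      have h1 : dist (g • x₀) (g • k₀) = d₀ := by rw [hdist, hd₀]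
      calc dist k₀ (g • k₀) ≤ dist k₀ x₀ + dist x₀ (g • x₀) + dist (g • x₀) (g • k₀) :=
            dist_triangle4 _ _ _ _
        _ = dist x₀ (g • x₀) + 2 * d₀ := by rw [h1, dist_comm, ← hd₀]; ring
    constructor
    · -- lower bound
      have h1 : w ≤ dist k₀ (g • k₀) / ε + 2 := hword_le g
      have h2 : ε * w ≤ dist k₀ (g • k₀) + 2 * ε := by
        have := mul_le_mul_of_nonneg_left h1 hε.le
        rw [mul_add, mul_div_cancel₀ _ (ne_of_gt hε)] at this
        linarith
      have h3 : (1 / max M (1 / ε)) * w ≤ ε * w := by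
        have hle : 1 / max M (1 / ε) ≤ ε := by
          rw [div_le_iff₀ (lt_of_lt_of_le (by positivity) (le_max_right M (1/ε)))]
          calc (1:ℝ) = ε * (1 / ε) := by field_simp
            _ ≤ ε * max M (1 / ε) := by gcongr; exact le_max_right _ _
        exact mul_le_mul_of_nonneg_right hle hw0
      rw [hkey]
      linarith
    · -- upper bound
      have h1 : dist k₀ (g • k₀) ≤ M * w := hdist_le g
      have h2 : M * w ≤ max M (1 / ε) * w :=
        mul_le_mul_of_nonneg_right (le_max_left _ _) hw0
      rw [hkey]
      linarith
  · intro x hxC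
    obtain ⟨γ, hγ⟩ := hKcover x hxC
    refine ⟨γ⁻¹, ?_⟩
    have h1 : dist (γ⁻¹ • k₀) x = dist k₀ (γ • x) := by
      rw [← hdist γ, ← mul_smul, mul_inv_cancel, one_smul]
    have h2 : dist k₀ (γ • x) ≤ D := hD hk₀K hγ
    calc dist (γ⁻¹ • x₀) x ≤ dist (γ⁻¹ • x₀) (γ⁻¹ • k₀) + dist (γ⁻¹ • k₀) x :=
          dist_triangle _ _ _
      _ = d₀ + dist k₀ (γ • x) := by rw [hdist, h1, hd₀]
      _ ≤ 2 * ε + D + 2 * d₀ := by linarith
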